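/- Let A be a Banach algebra with a right identity e. If d : A → A is a Jordan triple left derivation, i.e., a linear map with d(a³) = 3·a²·d(a) for all a ∈ A, then d is a Jordan left derivation, i.e., d(a²) = 2·a·d(a) for all a ∈ A. -/
import Mathlib

/-- Let `A` be a complex Banach algebra with a right identity `e`.  If
`d : A → A` is a Jordan triple left derivation (`d (a³) = 3 • (a² * d a)`), then `d` is a
Jordan left derivation (`d (a²) = 2 • (a * d a)`). -/
theorem jordanTripleLeftDerivation_is_jordanLeftDerivation
    {A : Type*} [NonUnitalNormedRing A] [NormedSpace ℂ A]
    [IsScalarTower ℂ A A] [SMulCommClass ℂ A A] [CompleteSpace A]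
    (e : A) (he : ∀ a : A, a * e = a)
    (d : A →ₗ[ℂ] A) (hd : ∀ a : A, d (a * a * a) = 3 • (a * a * d a)) :
    ∀ a : A, d (a * a) = 2 • (a * d a) := by
  have hd' : ∀ a : A, d (a * a * a) = (3:ℂ) • (a * a * d a) := by
    intro a
    rw [hd a, ← Nat.cast_smul_eq_nsmul ℂ]
    norm_num
  have he2 : e * e = e := he e
  have cancel3 : ∀ x y : A, (3:ℂ) • x = (3:ℂ) • y → x = y := by
    intro x y h
    have := congrArg (fun z => ((3:ℂ)⁻¹) • z) h
    simpa [smul_smul] using this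
  -- d e = 0
  have hde : d e = 0 := by
    have h := hd' e
    rw [he2, he2] at h
    have h2 : e * d e = (3:ℂ) • (e * d e) := by
      conv_lhs => rw [h]
      rw [mul_smul_comm, ← mul_assoc, he2]
    have h3 : e * d e = 0 := by
      have : ((3:ℂ) - 1) • (e * d e) = 0 := by
        rw [sub_smul, one_smul, ← h2, sub_self]
      have h4 : ((3:ℂ) - 1) ≠ 0 := by norm_num
      exact (smul_eq_zero.mp this).resolve_left h4
    rw [h, h3, smul_zero]
  -- polarization
  have star : ∀ a b : A, d (a*a*b) + d (a*b*a) + d (b*a*a)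
      = (3:ℂ) • ((a*b)*d a + (b*a)*d a + (a*a)*d b) := by
    intro a b
    have h1 := hd' (a+b)
    have h2 := hd' (a-b)
    have h3 := hd' b
    simp only [mul_add, add_mul, mul_sub, sub_mul, map_add, map_sub, smul_add, smul_sub] at h1 h2 h3
    linear_combination (norm := module) ((2:ℂ)⁻¹) • h1 - ((2:ℂ)⁻¹) • h2 - h3
  -- (1') : 2 d(eb) + d b = 3 e * d b
  have h1' : ∀ b : A, (2:ℂ) • d (e*b) + d b = (3:ℂ) • (e * d b) := by
    intro b
    have h := star e b
    simp only [he2, he, hde, mul_zero, zero_add, add_zero] at h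
    linear_combination (norm := module) h
  -- (A) : e * d (e*b) = e * d b
  have hA : ∀ b : A, e * d (e*b) = e * d b := by
    intro b
    have h := congrArg (fun z => e * z) (h1' b)
    simp only [mul_add, mul_smul_comm] at h
    rw [← mul_assoc, he2] at h
    -- h : 2 • (e * d (e*b)) + e * d b = 3 • (e * d b)
    have h2 : (2:ℂ) • (e * d (e*b)) = (2:ℂ) • (e * d b) := by
      have : (3:ℂ) • (e * d b) - e * d b = (2:ℂ) • (e * d b) := by module
      linear_combination (norm := module) h
    have := congrArg (fun z => ((2:ℂ)⁻¹) • z) h2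
    simpa [smul_smul] using this
  -- (B) : d (e*b) = e * d b
  have hB : ∀ b : A, d (e*b) = e * d b := by
    intro b
    have h := h1' (e*b)
    rw [← mul_assoc, he2] at h
    -- h : 2 • d (e*b) + d (e*b) = 3 • (e * d (e*b))
    have h2 : (3:ℂ) • d (e*b) = (3:ℂ) • (e * d (e*b)) := by
      linear_combination (norm := module) h
    have h3 := cancel3 _ _ h2
    rw [h3, hA]
  -- (C) : d b = e * d b
  have hC : ∀ b : A, d b = e * d b := by
    intro b
    have h := h1' b
    rw [hB] at h
    -- 2 • (e * d b) + d b = 3 • (e * d b)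
    linear_combination (norm := module) h
  -- (D) : d (e*b) = d b
  have hD : ∀ b : A, d (e*b) = d b := fun b => (hB b).trans (hC b).symm
  -- (9) : d (a*a) = a * d a + (e*a) * d a
  have h9 : ∀ a : A, d (a*a) = a * d a + (e*a) * d a := by
    intro a
    have h := star a e
    simp only [he, hde, mul_zero, add_zero] at h
    rw [mul_assoc e a a, hD] at h
    -- h : d(a*a) + d(a*a) + d(a*a) = 3 • (a*d a + e*a*d a)
    refine cancel3 _ _ ?_
    linear_combination (norm := module) h
  -- (10) : d (a*a) = 2 • ((e*a) * d a)
  have h10 : ∀ a : A, d (a*a) = (2:ℂ) • ((e*a) * d a) := by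
    intro a
    have h := h9 (e*a)
    have e1 : (e*a) * (e*a) = e * (a*a) := by
      rw [← mul_assoc, mul_assoc e a e, he a, mul_assoc]
    have e2 : e * (e*a) = e*a := by rw [← mul_assoc, he2]
    rw [e1, hD, e2, hD] at h
    -- h : d (a*a) = e*a * d a + e*a * d a
    rw [h]; module
  intro a
  have h := h9 a
  rw [h10 a] at h
  -- (2:ℂ) • (e*a * d a) = a * d a + e*a * d a  ⇒  e*a*d a = a * d a
  have key : (e*a) * d a = a * d a := by
    linear_combination (norm := module) h
  have : d (a*a) = (2:ℂ) • (a * d a) := by rw [h10 a, key]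
  rw [this, ← Nat.cast_smul_eq_nsmul ℂ]
  norm_num
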